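/- Let V = EuclideanSpace ℝ (Fin n) with its standard orthonormal basis (e_i), and let μ : V →ₗ[ℝ] V →ₗ[ℝ] V be a bilinear map satisfying μ x y = −μ y x for all x, y ∈ V. Set α i j l = ⟪μ (e i) (e j), e l⟫, and define the nil-Ricci form ric(x, y) = −(1/2) ∑_i ⟪μ x (e i), μ y (e i)⟫ + (1/4) ∑_i ∑_j ⟪μ (e i) (e j), x⟫ * ⟪μ (e i) (e j), y⟫. Then for every k ∈ Fin n, ric(e k, e k) = −(1/2) ∑_{i < j} ∑_l (α i j l)^2 * ((if i = k then 1 else 0) + (if j = k then 1 else 0) − (if l = k then 1 else 0)); that is, the diagonal entries of the nil-Ricci form with respect to the basis are given by −(1/2)·Yᵀ v, where Y is the root matrix with rows e_i + e_j − e_l weighted over the triples (i, j, l) with i < j and v is the vector of squared structure constants (α i j l)^2. -/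

import Mathlib

open scoped RealInnerProductSpace

lemma half_sum_aux {n : ℕ} (g : Fin n → Fin n → ℝ) (hs : ∀ i j, g i j = g j i)
    (hd : ∀ i, g i i = 0) :
    ∑ i, ∑ j ∈ Finset.univ.filter (fun j => i < j), g i j
      = (1/2) * ∑ i, ∑ j, g i j := by
  have key : ∀ i : Fin n, ∑ j, g i j =
      (∑ j ∈ Finset.univ.filter (fun j => i < j), g i j)
      + ∑ j ∈ Finset.univ.filter (fun j => j < i), g i j := by
    intro i
    rw [← Finset.sum_filter_add_sum_filter_not Finset.univ (fun j => i < j) (g i)]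
    congr 1
    refine (Finset.sum_subset ?_ ?_).symm
    · intro j hj
      simp only [Finset.mem_filter, Finset.mem_univ, true_and] at hj ⊢
      exact not_lt_of_gt hj
    · intro j hj hj2
      simp only [Finset.mem_filter, Finset.mem_univ, true_and, not_lt] at hj hj2
      have : j = i := le_antisymm hj hj2
      rw [this, hd]
  have swap : ∑ i, ∑ j ∈ Finset.univ.filter (fun j => j < i), g i j
      = ∑ i, ∑ j ∈ Finset.univ.filter (fun j => i < j), g i j := by
    rw [Finset.sum_comm' (t' := Finset.univ)
      (s' := fun j => Finset.univ.filter (fun i => j < i))]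
    · exact Finset.sum_congr rfl fun j _ => Finset.sum_congr rfl fun i _ => hs i j
    · intro x y; simp
  have : ∑ i, ∑ j, g i j = 2 * ∑ i, ∑ j ∈ Finset.univ.filter (fun j => i < j), g i j := by
    rw [Finset.sum_congr rfl fun i _ => key i, Finset.sum_add_distrib, swap]; ring
  rw [this]; ring

theorem nil_ricci_diagonal_via_root_matrix (n : ℕ)
    (μ : EuclideanSpace ℝ (Fin n) →ₗ[ℝ] EuclideanSpace ℝ (Fin n) →ₗ[ℝ] EuclideanSpace ℝ (Fin n))
    (hμ : ∀ x y, μ x y = - μ y x)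
    (e : Fin n → EuclideanSpace ℝ (Fin n))
    (he : ∀ i, e i = EuclideanSpace.single i 1)
    (α : Fin n → Fin n → Fin n → ℝ)
    (hα : ∀ i j l, α i j l = ⟪μ (e i) (e j), e l⟫)
    (ric : EuclideanSpace ℝ (Fin n) → EuclideanSpace ℝ (Fin n) → ℝ)
    (hric : ∀ x y, ric x y =
      -(1/2) * ∑ i, ⟪μ x (e i), μ y (e i)⟫ +
      (1/4) * ∑ i, ∑ j, ⟪μ (e i) (e j), x⟫ * ⟪μ (e i) (e j), y⟫) :
    ∀ k : Fin n, ric (e k) (e k) =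
      -(1/2) * ∑ i, ∑ j ∈ Finset.univ.filter (fun j => i < j), ∑ l,
        (α i j l) ^ 2 *
          ((if i = k then (1 : ℝ) else 0) + (if j = k then 1 else 0) -
            (if l = k then 1 else 0)) := by
  intro k
  -- basic facts
  have inner_e : ∀ (v : EuclideanSpace ℝ (Fin n)) (l : Fin n), ⟪v, e l⟫ = v l := by
    intro v l
    simp [he, PiLp.inner_apply, EuclideanSpace.single_apply]
  have inner_expand : ∀ v w : EuclideanSpace ℝ (Fin n),
      ⟪v, w⟫ = ∑ l, ⟪v, e l⟫ * ⟪w, e l⟫ := by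
    intro v w
    simp only [inner_e, PiLp.inner_apply, RCLike.inner_apply, starRingEnd_apply, star_trivial]
    exact Finset.sum_congr rfl fun _ _ => mul_comm _ _
  have hαsym : ∀ i j l, α i j l = - α j i l := by
    intro i j l; rw [hα, hα, hμ]; simp
  have hαdiag : ∀ i l, α i i l = 0 := by
    intro i l
    have := hαsym i i l; linarith
  set f : Fin n → Fin n → Fin n → ℝ := fun i j l => α i j l ^ 2 with hf
  have hfsym : ∀ i j l, f i j l = f j i l := by
    intro i j l; simp only [hf]; rw [hαsym i j l]; ring
  have hfdiag : ∀ i l, f i i l = 0 := by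
    intro i l; simp [hf, hαdiag]
  -- LHS
  have lhs_eq : ric (e k) (e k)
      = -(1/2) * ∑ i, ∑ l, f k i l + (1/4) * ∑ i, ∑ j, f i j k := by
    rw [hric]
    congr 1
    · congr 1
      refine Finset.sum_congr rfl fun i _ => ?_
      rw [inner_expand]
      refine Finset.sum_congr rfl fun l _ => ?_
      simp [hf, hα, sq]
    · congr 1
      refine Finset.sum_congr rfl fun i _ => Finset.sum_congr rfl fun j _ => ?_
      simp [hf, hα, sq]
  rw [lhs_eq]
  -- RHS
  have hg : ∑ i, ∑ j ∈ Finset.univ.filter (fun j => i < j), ∑ l,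
        (α i j l) ^ 2 *
          ((if i = k then (1 : ℝ) else 0) + (if j = k then 1 else 0) -
            (if l = k then 1 else 0))
      = (1/2) * ∑ i, ∑ j, ∑ l, f i j l *
          ((if i = k then (1 : ℝ) else 0) + (if j = k then 1 else 0) -
            (if l = k then 1 else 0)) := by
    exact half_sum_aux _
      (fun i j => by
        refine Finset.sum_congr rfl fun l _ => ?_
        rw [hαsym i j l]; ring_nf)
      (fun i => by
        refine Finset.sum_eq_zero fun l _ => ?_
        rw [hαdiag]; ring)
  rw [hg]
  -- expand the delta sums
  have expand : ∑ i, ∑ j, ∑ l, f i j l *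
          ((if i = k then (1 : ℝ) else 0) + (if j = k then 1 else 0) -
            (if l = k then 1 else 0))
      = (∑ j, ∑ l, f k j l) + (∑ i, ∑ l, f i k l) - (∑ i, ∑ j, f i j k) := by
    have : ∀ i j : Fin n, ∑ l, f i j l *
          ((if i = k then (1 : ℝ) else 0) + (if j = k then 1 else 0) -
            (if l = k then 1 else 0))
        = (if i = k then (1:ℝ) else 0) * (∑ l, f i j l)
          + (if j = k then (1:ℝ) else 0) * (∑ l, f i j l) - f i j k := by
      intro i j
      rw [show (∑ l, f i j l *
          ((if i = k then (1 : ℝ) else 0) + (if j = k then 1 else 0) -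
            (if l = k then 1 else 0)))
        = (∑ l, f i j l * ((if i = k then (1:ℝ) else 0) + (if j = k then 1 else 0)))
          - ∑ l, f i j l * (if l = k then (1:ℝ) else 0) by
          rw [← Finset.sum_sub_distrib]; exact Finset.sum_congr rfl fun l _ => by ring]
      congr 1
      · rw [← Finset.sum_mul]; ring
      · simp [mul_ite]
    simp only [this]
    rw [show ∀ F G H : Fin n → Fin n → ℝ, (∑ i, ∑ j, (F i j + G i j - H i j))
        = (∑ i, ∑ j, F i j) + (∑ i, ∑ j, G i j) - (∑ i, ∑ j, H i j) from
      fun F G H => by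
        simp only [Finset.sum_add_distrib, Finset.sum_sub_distrib]]
    congr 2
    · calc ∑ i, ∑ j, (if i = k then (1:ℝ) else 0) * (∑ l, f i j l)
          = ∑ i, (if i = k then (1:ℝ) else 0) * (∑ j, ∑ l, f i j l) := by
            refine Finset.sum_congr rfl fun i _ => ?_
            rw [Finset.mul_sum]
        _ = ∑ j, ∑ l, f k j l := by simp
    · calc ∑ i, ∑ j, (if j = k then (1:ℝ) else 0) * (∑ l, f i j l)
          = ∑ i, (∑ l, f i k l) := by
            refine Finset.sum_congr rfl fun i _ => ?_
            simp
        _ = ∑ i, ∑ l, f i k l := rfl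
  rw [expand]
  have e1 : ∑ i, ∑ l, f i k l = ∑ i, ∑ l, f k i l := by
    refine Finset.sum_congr rfl fun i _ => Finset.sum_congr rfl fun l _ => hfsym i k l
  rw [e1]
  ring
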